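/- For every ν > 0 and every z ∈ ℝ, the modified parabolic cylinder function admits the integral representation D̃_ν(z) = (1/Γ(ν)) ∫₀^∞ t^{ν−1} e^{−t²/2 − z t} dt. -/

import Mathlib

open Real Filter Finset MeasureTheory

/-- The even power series `u(z) = 1 + ∑_{k=1}^∞ (∏_{j=0}^{k-1}(ν+2j)) z^{2k}/(2k)!`
(the `k = 0` term of the `tsum` equals `1`). -/
noncomputable def evenSeries (ν z : ℝ) : ℝ :=
  ∑' k : ℕ, (∏ j ∈ Finset.range k, (ν + 2 * (j : ℝ))) * z ^ (2 * k) / (Nat.factorial (2 * k))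

/-- The odd power series `v(z) = ∑_{k=0}^∞ (∏_{j=0}^{k-1}(ν+2j+1)) z^{2k+1}/(2k+1)!`
(the `k = 0` term equals `z`). -/
noncomputable def oddSeries (ν z : ℝ) : ℝ :=
  ∑' k : ℕ, (∏ j ∈ Finset.range k, (ν + 2 * (j : ℝ) + 1)) * z ^ (2 * k + 1) /
    (Nat.factorial (2 * k + 1))

/-- The modified parabolic cylinder function
`D̃_ν(y) = 2^{−ν/2} √π [ (1 + ∑_{k≥1} ∏_{j=0}^{k-1}(ν+2j) y^{2k}/(2k)!)/Γ((ν+1)/2)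
  − √2 y (1 + ∑_{k≥1} ∏_{j=0}^{k-1}(ν+2j+1) y^{2k}/(2k+1)!)/Γ(ν/2) ]`,
which equals `e^{y²/4} D_{−ν}(y)` for the parabolic cylinder function `D_{−ν}`.
Note `y * (1 + ∑_{k≥1} ∏_{j=0}^{k-1}(ν+2j+1) y^{2k}/(2k+1)!) = oddSeries ν y`. -/
noncomputable def Dtilde (ν : ℝ) (y : ℝ) : ℝ :=
  (2 : ℝ) ^ (-ν / 2) * Real.sqrt Real.pi *
    (evenSeries ν y / Real.Gamma ((ν + 1) / 2) -
      Real.sqrt 2 * oddSeries ν y / Real.Gamma (ν / 2))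

/-- For every `ν > 0` and `z ∈ ℝ`, the integral representation
`D̃_ν(z) = (1/Γ(ν)) ∫₀^∞ t^{ν−1} e^{−t²/2 − z t} dt` holds. -/

lemma Gamma_add_nat' {x : ℝ} (hx : 0 < x) (k : ℕ) :
    Real.Gamma (x + k) = (∏ j ∈ Finset.range k, (x + j)) * Real.Gamma x := by
  induction k with
  | zero => simp
  | succ n ih =>
      have hpos : x + (n : ℝ) ≠ 0 := by positivity
      have h : x + ((n : ℕ) + 1 : ℕ) = (x + n) + 1 := by push_cast; ring
      rw [h, Real.Gamma_add_one hpos, ih, Finset.prod_range_succ]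
      ring_nf

lemma moment_eq {s : ℝ} (hs : -1 < s) :
    ∫ t in Set.Ioi (0:ℝ), t ^ s * Real.exp (-t ^ 2 / 2) =
      2 ^ ((s + 1) / 2 - 1) * Real.Gamma ((s + 1) / 2) := by
  have h : ∀ t : ℝ, t ^ s * Real.exp (-t ^ 2 / 2) = t ^ s * Real.exp (-(1/2 : ℝ) * t ^ (2:ℝ)) := by
    intro t; rw [Real.rpow_two]; ring_nf
  simp_rw [h]
  rw [integral_rpow_mul_exp_neg_mul_rpow two_pos hs one_half_pos]
  have h2 : ((1:ℝ)/2) ^ (-(s + 1) / 2) * (1/2) = 2 ^ ((s + 1) / 2 - 1) := by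
    have e1 : ((1:ℝ)/2) ^ (-(s + 1) / 2) = 2 ^ ((s+1)/2) := by
      rw [one_div, Real.inv_rpow (by norm_num), ← Real.rpow_neg (by norm_num)]
      congr 1; ring
    rw [e1, Real.rpow_sub two_pos, Real.rpow_one]; ring
  rw [h2]

section Swap
variable (ν z : ℝ)

private noncomputable def Fterm (n : ℕ) (t : ℝ) : ℝ :=
  ((-z) ^ n / (Nat.factorial n : ℝ)) * (t ^ (ν - 1 + n) * Real.exp (-t ^ 2 / 2))

variable {ν}

lemma Fterm_integrableOn (hν : 0 < ν) (n : ℕ) :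
    IntegrableOn (Fterm ν z n) (Set.Ioi 0) := by
  have hs : (-1:ℝ) < ν - 1 + n := by
    have := Nat.cast_nonneg (α := ℝ) n; linarith
  have base := integrableOn_rpow_mul_exp_neg_mul_sq one_half_pos hs
  have : Fterm ν z n = fun t => ((-z) ^ n / (Nat.factorial n : ℝ)) *
      (t ^ (ν - 1 + n) * Real.exp (-(1/2) * t ^ 2)) := by
    funext t; unfold Fterm; ring_nf
  rw [this]
  exact base.const_mul _

lemma Fterm_norm (n : ℕ) {t : ℝ} (ht : t ∈ Set.Ioi (0:ℝ)) :
    ‖Fterm ν z n t‖ = (|z| ^ n / (Nat.factorial n : ℝ)) *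
      (t ^ (ν - 1 + n) * Real.exp (-t ^ 2 / 2)) := by
  have ht' : (0:ℝ) ≤ t := le_of_lt ht
  have h1 : (0:ℝ) ≤ t ^ (ν - 1 + n) * Real.exp (-t ^ 2 / 2) :=
    mul_nonneg (Real.rpow_nonneg ht' _) (Real.exp_pos _).le
  rw [Fterm, norm_mul, Real.norm_of_nonneg h1, Real.norm_eq_abs, abs_div, abs_pow, abs_neg,
    Nat.abs_cast]

lemma Fterm_sum_le (hν : 0 < ν) (s : Finset ℕ) {t : ℝ} (ht : t ∈ Set.Ioi (0:ℝ)) :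
    ∑ n ∈ s, ‖Fterm ν z n t‖ ≤
      Real.exp (z ^ 2) * (t ^ (ν - 1) * Real.exp (-(1/4) * t ^ 2)) := by
  have ht0 : (0:ℝ) < t := ht
  have hsum : ∀ n ∈ s, ‖Fterm ν z n t‖ =
      (t ^ (ν - 1) * Real.exp (-t ^ 2 / 2)) * ((|z| * t) ^ n / (Nat.factorial n : ℝ)) := by
    intro n _
    rw [Fterm_norm z n ht, Real.rpow_add ht0, Real.rpow_natCast, mul_pow]
    ring
  rw [Finset.sum_congr rfl hsum, ← Finset.mul_sum]
  have hbound : ∑ n ∈ s, ((|z| * t) ^ n / (Nat.factorial n : ℝ)) ≤ Real.exp (|z| * t) := by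
    rw [Real.exp_eq_exp_ℝ, NormedSpace.exp_eq_tsum_div]
    exact Summable.sum_le_tsum s (fun n _ => by positivity) (NormedSpace.expSeries_div_summable (𝔸 := ℝ) _)
  have h1 : (0:ℝ) ≤ t ^ (ν - 1) * Real.exp (-t ^ 2 / 2) :=
    mul_nonneg (Real.rpow_nonneg ht0.le _) (Real.exp_pos _).le
  calc (t ^ (ν - 1) * Real.exp (-t ^ 2 / 2)) * ∑ n ∈ s, ((|z| * t) ^ n / (Nat.factorial n : ℝ))
      ≤ (t ^ (ν - 1) * Real.exp (-t ^ 2 / 2)) * Real.exp (|z| * t) :=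
        mul_le_mul_of_nonneg_left hbound h1
    _ = t ^ (ν - 1) * (Real.exp (-t ^ 2 / 2 + |z| * t)) := by rw [Real.exp_add]; ring
    _ ≤ Real.exp (z ^ 2) * (t ^ (ν - 1) * Real.exp (-(1/4) * t ^ 2)) := by
        rw [show Real.exp (z ^ 2) * (t ^ (ν - 1) * Real.exp (-(1/4) * t ^ 2)) =
          t ^ (ν - 1) * Real.exp (-(1/4) * t ^ 2 + z ^ 2) by rw [Real.exp_add]; ring]
        refine mul_le_mul_of_nonneg_left (Real.exp_le_exp.mpr ?_) (Real.rpow_nonneg ht0.le _)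
        nlinarith [sq_nonneg (t/2 - |z|), sq_abs z]
end Swap

section Swap2
variable {ν : ℝ} (z : ℝ)

lemma Fterm_norm_summable (hν : 0 < ν) :
    Summable (fun n : ℕ => ∫ t in Set.Ioi (0:ℝ), ‖Fterm ν z n t‖) := by
  have hG : IntegrableOn
      (fun t : ℝ => Real.exp (z^2) * (t ^ (ν - 1) * Real.exp (-(1/4) * t^2)))
      (Set.Ioi 0) :=
    (integrableOn_rpow_mul_exp_neg_mul_sq (by norm_num) (by linarith)).const_mul _
  apply summable_of_sum_le (fun n => integral_nonneg (fun t => norm_nonneg _))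
  intro s
  rw [← integral_finset_sum s (fun n _ => (Fterm_integrableOn z hν n).norm)]
  exact setIntegral_mono_on
    (integrable_finset_sum s fun n _ => (Fterm_integrableOn z hν n).norm)
    hG measurableSet_Ioi (fun t ht => Fterm_sum_le z hν s ht)

lemma Fterm_integral (hν : 0 < ν) (n : ℕ) :
    ∫ t in Set.Ioi (0:ℝ), Fterm ν z n t =
      ((-z) ^ n / (Nat.factorial n : ℝ)) *
        (2 ^ ((ν + n) / 2 - 1) * Real.Gamma ((ν + n) / 2)) := by
  have hs : (-1:ℝ) < ν - 1 + n := by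
    have := Nat.cast_nonneg (α := ℝ) n; linarith
  unfold Fterm
  rw [integral_const_mul, moment_eq hs, show (ν - 1 + (n:ℝ) + 1) = ν + n by ring]

lemma integral_repr_tsum (hν : 0 < ν) :
    Summable (fun n : ℕ => ∫ t in Set.Ioi (0:ℝ), Fterm ν z n t) ∧
    (∫ t in Set.Ioi (0:ℝ), t ^ (ν - 1) * Real.exp (-t ^ 2 / 2 - z * t)) =
      ∑' n : ℕ, ∫ t in Set.Ioi (0:ℝ), Fterm ν z n t := by
  have hsum := Fterm_norm_summable z hν
  have hint : ∀ n : ℕ, Integrable (Fterm ν z n) (volume.restrict (Set.Ioi 0)) :=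
    fun n => Fterm_integrableOn z hν n
  refine ⟨Summable.of_norm_bounded hsum (fun n => norm_integral_le_integral_norm _), ?_⟩
  rw [MeasureTheory.integral_tsum_of_summable_integral_norm hint hsum]
  refine setIntegral_congr_fun measurableSet_Ioi (fun t ht => ?_)
  have ht0 : (0:ℝ) < t := ht
  have hterm : ∀ n : ℕ, Fterm ν z n t =
      (t ^ (ν - 1) * Real.exp (-t ^ 2 / 2)) * ((-(z * t)) ^ n / (Nat.factorial n : ℝ)) := by
    intro n
    rw [Fterm, Real.rpow_add ht0, Real.rpow_natCast,
      show (-(z * t)) = (-z) * t by ring, mul_pow]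
    ring
  have he : ∑' n : ℕ, ((-(z * t)) ^ n / (Nat.factorial n : ℝ)) = Real.exp (-(z * t)) := by
    rw [Real.exp_eq_exp_ℝ, NormedSpace.exp_eq_tsum_div]
  rw [tsum_congr hterm, tsum_mul_left, he, mul_assoc, ← Real.exp_add,
    show -t ^ 2 / 2 + -(z * t) = -t ^ 2 / 2 - z * t by ring]
end Swap2

section Terms
variable {ν : ℝ} (z : ℝ)

lemma even_term (hν : 0 < ν) (k : ℕ) :
    ((-z) ^ (2 * k) / (Nat.factorial (2 * k) : ℝ)) *
      (2 ^ ((ν + ((2 * k : ℕ) : ℝ)) / 2 - 1) * Real.Gamma ((ν + ((2 * k : ℕ) : ℝ)) / 2)) =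
    (2 ^ (ν / 2 - 1) * Real.Gamma (ν / 2)) *
      ((∏ j ∈ Finset.range k, (ν + 2 * (j : ℝ))) * z ^ (2 * k) /
        (Nat.factorial (2 * k) : ℝ)) := by
  have hΓ : Real.Gamma ((ν + ((2 * k : ℕ) : ℝ)) / 2) =
      (∏ j ∈ Finset.range k, (ν / 2 + j)) * Real.Gamma (ν / 2) := by
    rw [show (ν + ((2 * k : ℕ) : ℝ)) / 2 = ν / 2 + (k : ℕ) by push_cast; ring,
      Gamma_add_nat' (by positivity)]
  have h2 : (2 : ℝ) ^ ((ν + ((2 * k : ℕ) : ℝ)) / 2 - 1) = 2 ^ (ν / 2 - 1) * 2 ^ k := by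
    rw [← Real.rpow_natCast 2 k, ← Real.rpow_add two_pos]
    congr 1; push_cast; ring
  have hp : (∏ j ∈ Finset.range k, (ν + 2 * (j : ℝ))) =
      2 ^ k * ∏ j ∈ Finset.range k, (ν / 2 + j) := by
    calc ∏ j ∈ Finset.range k, (ν + 2 * (j : ℝ))
        = ∏ j ∈ Finset.range k, (2 * (ν / 2 + (j : ℝ))) :=
          Finset.prod_congr rfl (fun j _ => by ring)
      _ = 2 ^ k * ∏ j ∈ Finset.range k, (ν / 2 + (j : ℝ)) := by
          rw [Finset.prod_mul_distrib, Finset.prod_const, Finset.card_range]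
  have hneg : (-z) ^ (2 * k) = z ^ (2 * k) := Even.neg_pow (even_two_mul k) z
  rw [hneg, hΓ, h2, hp]; ring

lemma odd_term (hν : 0 < ν) (k : ℕ) :
    ((-z) ^ (2 * k + 1) / (Nat.factorial (2 * k + 1) : ℝ)) *
      (2 ^ ((ν + ((2 * k + 1 : ℕ) : ℝ)) / 2 - 1) *
        Real.Gamma ((ν + ((2 * k + 1 : ℕ) : ℝ)) / 2)) =
    -((2 ^ ((ν - 1) / 2) * Real.Gamma ((ν + 1) / 2)) *
      ((∏ j ∈ Finset.range k, (ν + 2 * (j : ℝ) + 1)) * z ^ (2 * k + 1) /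
        (Nat.factorial (2 * k + 1) : ℝ))) := by
  have hΓ : Real.Gamma ((ν + ((2 * k + 1 : ℕ) : ℝ)) / 2) =
      (∏ j ∈ Finset.range k, ((ν + 1) / 2 + j)) * Real.Gamma ((ν + 1) / 2) := by
    rw [show (ν + ((2 * k + 1 : ℕ) : ℝ)) / 2 = (ν + 1) / 2 + (k : ℕ) by push_cast; ring,
      Gamma_add_nat' (by positivity)]
  have h2 : (2 : ℝ) ^ ((ν + ((2 * k + 1 : ℕ) : ℝ)) / 2 - 1) = 2 ^ ((ν - 1) / 2) * 2 ^ k := by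
    rw [← Real.rpow_natCast 2 k, ← Real.rpow_add two_pos]
    congr 1; push_cast; ring
  have hp : (∏ j ∈ Finset.range k, (ν + 2 * (j : ℝ) + 1)) =
      2 ^ k * ∏ j ∈ Finset.range k, ((ν + 1) / 2 + j) := by
    calc ∏ j ∈ Finset.range k, (ν + 2 * (j : ℝ) + 1)
        = ∏ j ∈ Finset.range k, (2 * ((ν + 1) / 2 + (j : ℝ))) :=
          Finset.prod_congr rfl (fun j _ => by ring)
      _ = 2 ^ k * ∏ j ∈ Finset.range k, ((ν + 1) / 2 + (j : ℝ)) := by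
          rw [Finset.prod_mul_distrib, Finset.prod_const, Finset.card_range]
  have hneg : (-z) ^ (2 * k + 1) = -(z ^ (2 * k + 1)) := Odd.neg_pow ⟨k, by ring⟩ z
  rw [hneg, hΓ, h2, hp]; ring

end Terms

theorem Dtilde_integral_repr (ν : ℝ) (hν : 0 < ν) (z : ℝ) :
    Dtilde ν z =
      (1 / Real.Gamma ν) *
        ∫ t in Set.Ioi (0 : ℝ), t ^ (ν - 1) * Real.exp (-t ^ 2 / 2 - z * t) := by
  obtain ⟨hsumm, hrepr⟩ := integral_repr_tsum z hν
  set a : ℕ → ℝ := fun n =>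
    ((-z) ^ n / (Nat.factorial n : ℝ)) *
      (2 ^ ((ν + n) / 2 - 1) * Real.Gamma ((ν + n) / 2)) with ha
  have hval : ∀ n, (∫ t in Set.Ioi (0:ℝ), Fterm ν z n t) = a n := Fterm_integral z hν
  have hsa : Summable a := hsumm.congr hval
  have he : Summable (fun k => a (2 * k)) :=
    hsa.comp_injective (fun p q h => by omega)
  have ho : Summable (fun k => a (2 * k + 1)) :=
    hsa.comp_injective (fun p q h => by omega)
  have hev : ∑' k, a (2 * k) = (2 ^ (ν / 2 - 1) * Real.Gamma (ν / 2)) * evenSeries ν z := by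
    rw [evenSeries, ← tsum_mul_left]
    exact tsum_congr (fun k => even_term z hν k)
  have hod : ∑' k, a (2 * k + 1) =
      -((2 ^ ((ν - 1) / 2) * Real.Gamma ((ν + 1) / 2)) * oddSeries ν z) := by
    rw [oddSeries, ← tsum_mul_left, ← tsum_neg]
    exact tsum_congr (fun k => odd_term z hν k)
  have key : (∫ t in Set.Ioi (0:ℝ), t ^ (ν - 1) * Real.exp (-t ^ 2 / 2 - z * t)) =
      (2 ^ (ν / 2 - 1) * Real.Gamma (ν / 2)) * evenSeries ν z -
        (2 ^ ((ν - 1) / 2) * Real.Gamma ((ν + 1) / 2)) * oddSeries ν z := by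
    rw [hrepr, tsum_congr hval, ← tsum_even_add_odd he ho, hev, hod]; ring
  have hgpos : 0 < Real.Gamma ν := Real.Gamma_pos_of_pos hν
  have hg1 : 0 < Real.Gamma (ν / 2) := Real.Gamma_pos_of_pos (by linarith)
  have hg2 : 0 < Real.Gamma ((ν + 1) / 2) := Real.Gamma_pos_of_pos (by linarith)
  have hdup : Real.Gamma (ν / 2) * Real.Gamma ((ν + 1) / 2) =
      Real.Gamma ν * 2 ^ (1 - ν) * Real.sqrt Real.pi := by
    have h := Real.Gamma_mul_Gamma_add_half (ν / 2)
    rw [show 2 * (ν / 2) = ν by ring, show ν / 2 + 1 / 2 = (ν + 1) / 2 by ring] at h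
    exact h
  have e1 : (2:ℝ) ^ (ν / 2 - 1) * 2 ^ (1 - ν) = 2 ^ (-ν / 2) := by
    rw [← Real.rpow_add two_pos]; congr 1; ring
  have e2 : (2:ℝ) ^ ((ν - 1) / 2) * 2 ^ (1 - ν) = 2 ^ (-ν / 2) * Real.sqrt 2 := by
    rw [Real.sqrt_eq_rpow, ← Real.rpow_add two_pos, ← Real.rpow_add two_pos]; congr 1; ring
  have hc1 : (2:ℝ) ^ (-ν / 2) * Real.sqrt Real.pi / Real.Gamma ((ν + 1) / 2) =
      2 ^ (ν / 2 - 1) * Real.Gamma (ν / 2) / Real.Gamma ν := by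
    rw [div_eq_div_iff hg2.ne' hgpos.ne']
    linear_combination (-(2:ℝ) ^ (ν / 2 - 1)) * hdup -
      Real.sqrt Real.pi * Real.Gamma ν * e1
  have hc2 : (2:ℝ) ^ (-ν / 2) * Real.sqrt Real.pi * Real.sqrt 2 / Real.Gamma (ν / 2) =
      2 ^ ((ν - 1) / 2) * Real.Gamma ((ν + 1) / 2) / Real.Gamma ν := by
    rw [div_eq_div_iff hg1.ne' hgpos.ne']
    linear_combination (-(2:ℝ) ^ ((ν - 1) / 2)) * hdup -
      Real.sqrt Real.pi * Real.Gamma ν * e2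
  rw [key]
  calc Dtilde ν z
      = (2 ^ (-ν / 2) * Real.sqrt Real.pi / Real.Gamma ((ν + 1) / 2)) * evenSeries ν z -
        (2 ^ (-ν / 2) * Real.sqrt Real.pi * Real.sqrt 2 / Real.Gamma (ν / 2)) * oddSeries ν z := by
        rw [Dtilde]; ring
    _ = (2 ^ (ν / 2 - 1) * Real.Gamma (ν / 2) / Real.Gamma ν) * evenSeries ν z -
        (2 ^ ((ν - 1) / 2) * Real.Gamma ((ν + 1) / 2) / Real.Gamma ν) * oddSeries ν z := by
        rw [hc1, hc2]
    _ = (1 / Real.Gamma ν) *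
        ((2 ^ (ν / 2 - 1) * Real.Gamma (ν / 2)) * evenSeries ν z -
          (2 ^ ((ν - 1) / 2) * Real.Gamma ((ν + 1) / 2)) * oddSeries ν z) := by ring
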